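/- Let V be a contiguous vtree over ordered variables X_1,…,X_n and let [a,b] be any interval. Let C_{a:b} be the set of ⊆-maximal nodes v of V whose covered interval is contained in {X_a,…,X_b}. Then for every depth level k of V, the set C_{a:b} contains at most 4 nodes at depth k; hence |C_{a:b}| ≤ 4d where d is the depth of V. -/

import Mathlib

open scoped BigOperators

/-! ### Probabilistic circuits

A probabilistic circuit is a rooted DAG of leaf, sum and product nodes.  We represent the
DAG by a finite sequence of nodes; well-formedness (`PC.WF`) requires that the children of
every node have strictly smaller index, and the root is the node of largest index. -/

inductive PCNode (ι : Type) (Val : ι → Type) (N : ℕ) where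
  | leaf (v : ι) (f : Val v → ℝ)
  | sum (ch : List (Fin N × ℝ))
  | prod (ch : List (Fin N))

namespace PCNode

variable {ι : Type} {Val : ι → Type} {N : ℕ}

def children : PCNode ι Val N → List (Fin N)
  | .leaf _ _ => []
  | .sum ch => ch.map Prod.fst
  | .prod ch => ch

def childCount : PCNode ι Val N → ℕ
  | .leaf _ _ => 0
  | .sum ch => ch.length
  | .prod ch => ch.length

def isProdB : PCNode ι Val N → Bool
  | .prod _ => true
  | _ => false

end PCNode

structure PC (ι : Type) (Val : ι → Type) where
  numNodes : ℕ
  node : Fin numNodes → PCNode ι Val numNodes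

namespace PC

variable {ι : Type} {Val : ι → Type}

/-- Acyclicity: every edge goes from a larger to a strictly smaller index. -/
def WF (C : PC ι Val) : Prop :=
  ∀ i : Fin C.numNodes, ∀ j ∈ (C.node i).children, (j : ℕ) < (i : ℕ)

/-- Fuelled evaluation of a node; for a well-formed circuit, fuel `C.numNodes` always
suffices. -/
def evalFuel (C : PC ι Val) (x : ∀ i, Val i) : ℕ → Fin C.numNodes → ℝ
  | 0, _ => 0
  | k+1, i =>
    match C.node i with
    | .leaf v f => f (x v)
    | .sum ch => (ch.map fun p => p.2 * evalFuel C x k p.1).sum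
    | .prod ch => (ch.map fun j => evalFuel C x k j).prod

def nodeEval (C : PC ι Val) (x : ∀ i, Val i) (i : Fin C.numNodes) : ℝ :=
  evalFuel C x C.numNodes i

/-- The function computed by the circuit (the value of its root node). -/
def eval (C : PC ι Val) (x : ∀ i, Val i) : ℝ :=
  if h : 0 < C.numNodes then nodeEval C x ⟨C.numNodes - 1, by omega⟩ else 0

def scopeFuel [DecidableEq ι] (C : PC ι Val) : ℕ → Fin C.numNodes → Finset ι
  | 0, _ => ∅
  | k+1, i =>
    match C.node i with
    | .leaf v _ => {v}
    | .sum ch => (ch.map fun p => scopeFuel C k p.1).foldr (· ∪ ·) ∅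
    | .prod ch => (ch.map fun j => scopeFuel C k j).foldr (· ∪ ·) ∅

/-- The scope of a node: the set of variables its subcircuit depends on. -/
def scope [DecidableEq ι] (C : PC ι Val) (i : Fin C.numNodes) : Finset ι :=
  scopeFuel C C.numNodes i

def rootScope [DecidableEq ι] (C : PC ι Val) : Finset ι :=
  if h : 0 < C.numNodes then scope C ⟨C.numNodes - 1, by omega⟩ else ∅

/-- The size of a circuit: its number of edges. -/
def numEdges (C : PC ι Val) : ℕ :=
  ∑ i : Fin C.numNodes, (C.node i).childCount

def depthFuel (C : PC ι Val) : ℕ → Fin C.numNodes → ℕ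
  | 0, _ => 0
  | k+1, i =>
    match C.node i with
    | .leaf _ _ => 0
    | .sum ch => (ch.map fun p => depthFuel C k p.1 + 1).foldr max 0
    | .prod ch => (ch.map fun j => depthFuel C k j + 1).foldr max 0

/-- The depth of a circuit: the length of the longest root-to-leaf path. -/
def depth (C : PC ι Val) : ℕ :=
  if h : 0 < C.numNodes then depthFuel C C.numNodes ⟨C.numNodes - 1, by omega⟩ else 0

/-- All children of any sum node have the same scope. -/
def Smooth [DecidableEq ι] (C : PC ι Val) : Prop :=
  ∀ (i : Fin C.numNodes) (ch : List (Fin C.numNodes × ℝ)), C.node i = .sum ch →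
    ∀ p ∈ ch, ∀ q ∈ ch, scope C p.1 = scope C q.1

/-- The children of any product node have pairwise disjoint scopes. -/
def Decomposable [DecidableEq ι] (C : PC ι Val) : Prop :=
  ∀ (i : Fin C.numNodes) (ch : List (Fin C.numNodes)), C.node i = .prod ch →
    ch.Pairwise fun a b => Disjoint (scope C a) (scope C b)

/-- Sum-node weights and leaf functions are nonnegative. -/
def NonnegWeights (C : PC ι Val) : Prop :=
  (∀ (i : Fin C.numNodes) (ch : List (Fin C.numNodes × ℝ)), C.node i = .sum ch →
      ∀ p ∈ ch, 0 ≤ p.2) ∧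
  (∀ (i : Fin C.numNodes) (v : ι) (f : Val v → ℝ), C.node i = .leaf v f → ∀ a, 0 ≤ f a)

/-- The weights of every sum node sum to one. -/
def NormalizedSums (C : PC ι Val) : Prop :=
  ∀ (i : Fin C.numNodes) (ch : List (Fin C.numNodes × ℝ)), C.node i = .sum ch →
    (ch.map Prod.snd).sum = 1

/-- Every leaf computes a probability distribution over its variable. -/
def NormalizedLeaves [∀ i, Fintype (Val i)] (C : PC ι Val) : Prop :=
  ∀ (i : Fin C.numNodes) (v : ι) (f : Val v → ℝ), C.node i = .leaf v f → ∑ a, f a = 1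

/-- Sum/leaf and product nodes alternate: children of sums are products and children of
products are sums or leaves. -/
def Alternating (C : PC ι Val) : Prop :=
  (∀ (i : Fin C.numNodes) (ch : List (Fin C.numNodes × ℝ)), C.node i = .sum ch →
      ∀ p ∈ ch, (C.node p.1).isProdB = true) ∧
  (∀ (i : Fin C.numNodes) (ch : List (Fin C.numNodes)), C.node i = .prod ch →
      ∀ j ∈ ch, (C.node j).isProdB = false)

/-- For every input, at most one child of each sum node evaluates to a nonzero value. -/
def Deterministic (C : PC ι Val) : Prop :=
  ∀ (x : ∀ i, Val i) (i : Fin C.numNodes) (ch : List (Fin C.numNodes × ℝ)),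
    C.node i = .sum ch → ∀ p ∈ ch, ∀ q ∈ ch,
      nodeEval C x p.1 ≠ 0 → nodeEval C x q.1 ≠ 0 → p.1 = q.1

/-- The number of product nodes with a given scope. -/
def prodCount [DecidableEq ι] (C : PC ι Val) (S : Finset ι) : ℕ :=
  (Finset.univ.filter fun i : Fin C.numNodes =>
    (C.node i).isProdB = true ∧ scope C i = S).card

/-- The index of a product node within the product nodes sharing its scope. -/
def idxOf [DecidableEq ι] (C : PC ι Val) (i : Fin C.numNodes) : ℕ :=
  (Finset.univ.filter fun j : Fin C.numNodes =>
    (j : ℕ) < (i : ℕ) ∧ (C.node j).isProdB = true ∧ scope C j = scope C i).card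

/-- Bundle of basic "probabilistic circuit over all the variables" conditions:
well-formed DAG, nonnegative normalized weights, normalized leaves, alternation of
sum/leaf and product nodes, and the root depending on all variables. -/
def IsPCOver [DecidableEq ι] [Fintype ι] [∀ i, Fintype (Val i)] (C : PC ι Val) : Prop :=
  C.WF ∧ C.NonnegWeights ∧ C.NormalizedSums ∧ C.NormalizedLeaves ∧ C.Alternating ∧
    C.rootScope = Finset.univ

end PC

/-! ### Vtrees -/

inductive Vtree (ι : Type) where
  | leaf (x : ι)
  | node (l r : Vtree ι)
deriving DecidableEq

namespace Vtree

variable {ι : Type}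

def varsFinset [DecidableEq ι] : Vtree ι → Finset ι
  | .leaf x => {x}
  | .node l r => varsFinset l ∪ varsFinset r

def leavesList : Vtree ι → List ι
  | .leaf x => [x]
  | .node l r => leavesList l ++ leavesList r

/-- A vtree over a set `S` of variables: its leaves are in bijection with `S`. -/
def ValidOver (T : Vtree ι) (S : Set ι) : Prop :=
  T.leavesList.Nodup ∧ ∀ x : ι, x ∈ T.leavesList ↔ x ∈ S

def numNodesV : Vtree ι → ℕ
  | .leaf _ => 1
  | .node l r => numNodesV l + numNodesV r + 1

def IsChildOf (c p : Vtree ι) : Prop :=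
  match p with
  | .leaf _ => False
  | .node l r => c = l ∨ c = r

inductive IsSubtreeOf : Vtree ι → Vtree ι → Prop
  | refl (t : Vtree ι) : IsSubtreeOf t t
  | left {s l r : Vtree ι} : IsSubtreeOf s l → IsSubtreeOf s (.node l r)
  | right {s l r : Vtree ι} : IsSubtreeOf s r → IsSubtreeOf s (.node l r)

def subtreesList : Vtree ι → List (Vtree ι)
  | .leaf x => [.leaf x]
  | .node l r => .node l r :: (subtreesList l ++ subtreesList r)

def isNodeB : Vtree ι → Bool
  | .leaf _ => false
  | .node _ _ => true

/-- The inner (non-leaf) nodes of a vtree. -/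
def innerFinset [DecidableEq ι] (V : Vtree ι) : Finset (Vtree ι) :=
  (V.subtreesList.filter fun t => t.isNodeB).toFinset

def depthV : Vtree ι → ℕ
  | .leaf _ => 0
  | .node l r => max (depthV l) (depthV r) + 1

/-- The nodes of a vtree occurring at a given depth. -/
def atDepth : Vtree ι → ℕ → Set (Vtree ι)
  | t, 0 => {t}
  | .leaf _, _+1 => ∅
  | .node l r, k+1 => atDepth l k ∪ atDepth r k

theorem numNodesV_lt_of_isChildOf {c p : Vtree ι} (h : c.IsChildOf p) :
    c.numNodesV < p.numNodesV := by
  cases p with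
  | leaf x => exact h.elim
  | node l r =>
    rcases h with h | h <;> subst h <;> simp only [numNodesV] <;> omega

end Vtree

/-- The tree `V_{v → Z_v}`, viewed as a graph: vertices are the subtrees of `V`
(inner subtrees play the role of the latent variables `Z_v`, leaves the role of the
variables `X`), with edges between each node and its children. -/
def vtreeGraph {ι : Type} (V : Vtree ι) : SimpleGraph (Vtree ι) where
  Adj s t := (s.IsChildOf t ∨ t.IsChildOf s) ∧ s.IsSubtreeOf V ∧ t.IsSubtreeOf V
  symm := by
    constructor
    rintro s t ⟨h, hs, ht⟩
    exact ⟨h.symm, ht, hs⟩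
  loopless := by
    constructor
    rintro s ⟨h, -, -⟩
    rcases h with h | h <;>
      exact absurd (Vtree.numNodesV_lt_of_isChildOf h) (lt_irrefl _)

namespace PC

variable {ι : Type} {Val : ι → Type}

/-- Structured decomposability with respect to a vtree: every product node has exactly
two children, whose scopes are the variables of the two children of an inner node of the
vtree. -/
def StructuredBy [DecidableEq ι] (C : PC ι Val) (V : Vtree ι) : Prop :=
  ∀ (i : Fin C.numNodes) (ch : List (Fin C.numNodes)), C.node i = .prod ch →
    ∃ (c₁ c₂ : Fin C.numNodes) (l r : Vtree ι), ch = [c₁, c₂] ∧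
      (Vtree.node l r).IsSubtreeOf V ∧
      scope C c₁ = l.varsFinset ∧ scope C c₂ = r.varsFinset

/-- Generalized structured decomposability (for products with arbitrarily many children):
every product node decomposes the variables of some vtree node into the variables of a
family of its subtrees. -/
def StructuredByGen [DecidableEq ι] (C : PC ι Val) (V : Vtree ι) : Prop :=
  ∀ (i : Fin C.numNodes) (ch : List (Fin C.numNodes)), C.node i = .prod ch →
    ∃ u : Vtree ι, u.IsSubtreeOf V ∧
      (∀ j ∈ ch, ∃ s : Vtree ι, s.IsSubtreeOf u ∧ scope C j = s.varsFinset) ∧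
      (ch.map fun j => scope C j).foldr (· ∪ ·) ∅ = u.varsFinset

/-- The hidden state size: the maximum number of product nodes sharing the scope of an
inner vtree node. -/
def hiddenStateSize [DecidableEq ι] (C : PC ι Val) (V : Vtree ι) : ℕ :=
  V.innerFinset.sup fun t => prodCount C t.varsFinset

end PC

/-! ### Contiguity and linear vtrees (for variables `Fin n`) -/

def IsIntervalFin {n : ℕ} (S : Finset (Fin n)) : Prop :=
  ∃ a b : ℕ, ∀ i : Fin n, i ∈ S ↔ (a ≤ (i : ℕ) ∧ (i : ℕ) ≤ b)

def PC.ContiguousPC {n : ℕ} {Val : Fin n → Type} (C : PC (Fin n) Val) : Prop :=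
  ∀ i : Fin C.numNodes, IsIntervalFin (PC.scope C i)

def Vtree.ContiguousV {n : ℕ} (V : Vtree (Fin n)) : Prop :=
  ∀ t : Vtree (Fin n), t.IsSubtreeOf V → IsIntervalFin t.varsFinset

inductive Vtree.IsLinearFrom {n : ℕ} : ℕ → Vtree (Fin n) → Prop
  | single (a : ℕ) (ha : a < n) (h : a + 1 = n) : IsLinearFrom a (.leaf ⟨a, ha⟩)
  | cons (a : ℕ) (ha : a < n) (T : Vtree (Fin n)) (h : a + 1 < n) :
      IsLinearFrom (a+1) T → IsLinearFrom a (.node (.leaf ⟨a, ha⟩) T)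

/-- The (right-)linear vtree, splitting `{Xᵢ}` from `{Xᵢ₊₁, …, Xₙ}` at each level. -/
def Vtree.IsLinear {n : ℕ} (V : Vtree (Fin n)) : Prop := Vtree.IsLinearFrom 0 V

/-! ### Blocking, covers and vtree labellings -/

/-- `C` blocks all paths between `A` and `B` in the graph `G`. -/
def SimpleGraph.BlocksSets {α : Type} (G : SimpleGraph α) (C A B : Set α) : Prop :=
  ∀ ⦃a b : α⦄, a ∈ A → b ∈ B → ∀ p : G.Walk a b, ∃ c ∈ C, c ∈ p.support

/-- A valid labelling of a target vtree `W` with respect to a (tree-shaped) graph `G`,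
where the variable `i` is represented by the vertex `xv i` and `X` is the set of all
variables.  The root is labelled `∅`, each leaf is labelled by the parent (i.e. the
neighbours) of its variable, the label of every inner node covers its variables, and the
labels of the children block their variables from the other labels. -/
structure IsValidLabelling {α ι : Type} [DecidableEq ι] (G : SimpleGraph α) (xv : ι → α)
    (X : Set ι) (W : Vtree ι) (label : Vtree ι → Set α) : Prop where
  root_empty : label W = ∅
  leaf_parent : ∀ x : ι, (Vtree.leaf x).IsSubtreeOf W →
    label (.leaf x) = {p | G.Adj (xv x) p}
  covers : ∀ l r : Vtree ι, (Vtree.node l r).IsSubtreeOf W →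
    G.BlocksSets (label (.node l r))
      (xv '' ((Vtree.node l r).varsFinset : Set ι))
      (xv '' (X \ ((Vtree.node l r).varsFinset : Set ι)))
  blocks_left : ∀ l r : Vtree ι, (Vtree.node l r).IsSubtreeOf W →
    G.BlocksSets (label l) (xv '' (l.varsFinset : Set ι)) (label r ∪ label (.node l r))
  blocks_right : ∀ l r : Vtree ι, (Vtree.node l r).IsSubtreeOf W →
    G.BlocksSets (label r) (xv '' (r.varsFinset : Set ι)) (label l ∪ label (.node l r))

/-! ### The augmented circuit -/

/-- Value types for the augmented circuit: the original variables keep their values, and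
each latent variable `Z_v` (indexed by the vtree node `v`) takes natural number values. -/
@[reducible] def augVal {ι : Type} (Val : ι → Type) : ι ⊕ Vtree ι → Type
  | .inl i => Val i
  | .inr _ => ℕ

/-- Find the subtree of a vtree with the given variable set (if any). -/
def Vtree.findByVars {ι : Type} [DecidableEq ι] : Vtree ι → Finset ι → Option (Vtree ι)
  | .leaf x, S => if S = {x} then some (.leaf x) else none
  | .node l r, S =>
      if S = (Vtree.node l r).varsFinset then some (.node l r)
      else (findByVars l S).orElse fun _ => findByVars r S

/-- The augmented circuit `A_aug` of a structured circuit: each product node `t` with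
scope `X_v` gets an additional leaf child over the latent variable `Z_v`, computing the
indicator function `1[Z_v = idx(t)]`.  (Node `2*i+1` is a copy of node `i` of the original
circuit and node `2*i` is the extra indicator leaf attached to it when `i` is a product.) -/
def PC.augment {ι : Type} {Val : ι → Type} [DecidableEq ι] (C : PC ι Val) (V : Vtree ι) :
    PC (ι ⊕ Vtree ι) (augVal Val) where
  numNodes := 2 * C.numNodes
  node := fun k =>
    if hk : (k : ℕ) % 2 = 1 then
      match C.node ⟨(k : ℕ) / 2, by have := k.isLt; omega⟩ with
      | .leaf v f => .leaf (Sum.inl v) f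
      | .sum ch => .sum (ch.map fun p =>
          ((⟨2 * (p.1 : ℕ) + 1, by have := p.1.isLt; omega⟩ : Fin (2 * C.numNodes)), p.2))
      | .prod ch => .prod ((ch.map fun (j : Fin C.numNodes) =>
          (⟨2 * (j : ℕ) + 1, by have := j.isLt; omega⟩ : Fin (2 * C.numNodes))) ++
          [⟨2 * ((k : ℕ) / 2), by have := k.isLt; omega⟩])
    else
      match C.node ⟨(k : ℕ) / 2, by have := k.isLt; omega⟩ with
      | .prod _ => .leaf
          (Sum.inr ((V.findByVars (PC.scope C ⟨(k : ℕ) / 2, by have := k.isLt; omega⟩)).getD V))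
          (fun m => if m = PC.idxOf C ⟨(k : ℕ) / 2, by have := k.isLt; omega⟩ then 1 else 0)
      | _ => .leaf (Sum.inr V) (fun _ => 1)

/-- Combine an assignment of the observed variables with an assignment of the latent
variables into an assignment for the augmented circuit. -/
def augAssign {ι : Type} {Val : ι → Type} [DecidableEq ι] (V : Vtree ι) (x : ∀ i, Val i)
    (z : ∀ t ∈ V.innerFinset, ℕ) : ∀ s : ι ⊕ Vtree ι, augVal Val s :=
  fun s => match s with
  | .inl i => x i
  | .inr t => if ht : t ∈ V.innerFinset then z t ht else 0

/-- The vtree of the augmented circuit: a new leaf for `Z_v` is attached at each inner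
node `v`. -/
def Vtree.augTree {ι : Type} : Vtree ι → Vtree (ι ⊕ Vtree ι)
  | .leaf x => .leaf (.inl x)
  | .node l r => .node (.leaf (.inr (.node l r))) (.node (augTree l) (augTree r))

/-- `maxCover V S`: the set of ⊆-maximal nodes of the vtree `V` whose covered variables
are contained in `S`. -/
def maxCover {ι : Type} [DecidableEq ι] (V : Vtree ι) (S : Set ι) : Set (Vtree ι) :=
  {t : Vtree ι | t.IsSubtreeOf V ∧ (t.varsFinset : Set ι) ⊆ S ∧
    ∀ u : Vtree ι, u.IsSubtreeOf V → (u.varsFinset : Set ι) ⊆ S → t.IsSubtreeOf u → u = t}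

/-- The interval `{i : Fin n | a ≤ i ≤ b}` of variables. -/
def finInterval (n : ℕ) (a b : ℕ) : Set (Fin n) := {i : Fin n | a ≤ (i : ℕ) ∧ (i : ℕ) ≤ b}

namespace Vtree

variable {ι : Type}

theorem isSubtreeOf_trans' {s t u : Vtree ι} (h1 : s.IsSubtreeOf t) (h2 : t.IsSubtreeOf u) :
    s.IsSubtreeOf u := by
  induction h2 with
  | refl => exact h1
  | left _ ih => exact .left ih
  | right _ ih => exact .right ih

theorem mem_varsFinset_iff [DecidableEq ι] {x : ι} :
    ∀ {t : Vtree ι}, x ∈ t.varsFinset ↔ x ∈ t.leavesList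
  | .leaf y => by simp [varsFinset, leavesList]
  | .node l r => by
      simp [varsFinset, leavesList, mem_varsFinset_iff (t := l), mem_varsFinset_iff (t := r)]

theorem varsFinset_nonempty [DecidableEq ι] : ∀ t : Vtree ι, t.varsFinset.Nonempty
  | .leaf y => ⟨y, by simp [varsFinset]⟩
  | .node l r => by
      obtain ⟨y, hy⟩ := varsFinset_nonempty l
      exact ⟨y, by simp [varsFinset, hy]⟩

theorem varsFinset_subset_of_isSubtreeOf [DecidableEq ι] {s t : Vtree ι}
    (h : s.IsSubtreeOf t) : s.varsFinset ⊆ t.varsFinset := by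
  induction h with
  | refl => exact subset_rfl
  | left _ ih => exact ih.trans (by simp [varsFinset])
  | right _ ih => exact ih.trans (by simp [varsFinset])

theorem atDepth_zero (V : Vtree ι) : V.atDepth 0 = {V} := by cases V <;> rfl

theorem isSubtreeOf_of_mem_atDepth :
    ∀ (V : Vtree ι) (k : ℕ) (t : Vtree ι), t ∈ V.atDepth k → t.IsSubtreeOf V
  | V, 0, t, ht => by rw [atDepth_zero] at ht; rw [ht]; exact .refl V
  | .leaf x, k+1, t, ht => absurd ht (by simp [atDepth])
  | .node l r, k+1, t, ht => by
      rcases (show t ∈ l.atDepth k ∪ r.atDepth k from ht) with h | h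
      · exact .left (isSubtreeOf_of_mem_atDepth l k t h)
      · exact .right (isSubtreeOf_of_mem_atDepth r k t h)

theorem exists_parent :
    ∀ (V : Vtree ι) (k : ℕ) (t : Vtree ι), t ∈ V.atDepth (k+1) →
      ∃ l r : Vtree ι, Vtree.node l r ∈ V.atDepth k ∧ (t = l ∨ t = r)
  | .leaf x, k, t, ht => absurd ht (by simp [atDepth])
  | .node l r, 0, t, ht => by
      rcases (show t ∈ l.atDepth 0 ∪ r.atDepth 0 from ht) with h | h <;>
        rw [atDepth_zero] at h
      · exact ⟨l, r, by rw [atDepth_zero]; rfl, Or.inl h⟩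
      · exact ⟨l, r, by rw [atDepth_zero]; rfl, Or.inr h⟩
  | .node l r, k+1, t, ht => by
      rcases (show t ∈ l.atDepth (k+1) ∪ r.atDepth (k+1) from ht) with h | h
      · obtain ⟨l', r', hp, hlr⟩ := exists_parent l k t h
        exact ⟨l', r', Or.inl hp, hlr⟩
      · obtain ⟨l', r', hp, hlr⟩ := exists_parent r k t h
        exact ⟨l', r', Or.inr hp, hlr⟩

theorem exists_atDepth {t V : Vtree ι} (h : t.IsSubtreeOf V) :
    ∃ k, k ≤ V.depthV ∧ t ∈ V.atDepth k := by
  induction h with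
  | refl => exact ⟨0, Nat.zero_le _, by rw [atDepth_zero]; rfl⟩
  | @left l r _ ih =>
      obtain ⟨k, hk, hm⟩ := ih
      exact ⟨k+1, by simp [depthV]; omega, Or.inl hm⟩
  | @right l r _ ih =>
      obtain ⟨k, hk, hm⟩ := ih
      exact ⟨k+1, by simp [depthV]; omega, Or.inr hm⟩

theorem atDepth_eq_of_mem_vars [DecidableEq ι] :
    ∀ (V : Vtree ι), V.leavesList.Nodup → ∀ (k : ℕ) (t u : Vtree ι),
      t ∈ V.atDepth k → u ∈ V.atDepth k → ∀ x : ι,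
      x ∈ t.varsFinset → x ∈ u.varsFinset → t = u
  | V, _, 0, t, u, ht, hu, _, _, _ => by
      rw [atDepth_zero] at ht hu; rw [ht, hu]
  | .leaf y, _, k+1, t, u, ht, _, _, _, _ => absurd ht (by simp [atDepth])
  | .node l r, hnd, k+1, t, u, ht, hu, x, hxt, hxu => by
      rw [leavesList, List.nodup_append] at hnd
      obtain ⟨hl, hr, hdisj⟩ := hnd
      have keyl : ∀ v : Vtree ι, v ∈ l.atDepth k → x ∈ v.varsFinset → x ∈ l.leavesList :=
        fun v hv hx => mem_varsFinset_iff.mp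
          (varsFinset_subset_of_isSubtreeOf (isSubtreeOf_of_mem_atDepth l k v hv) hx)
      have keyr : ∀ v : Vtree ι, v ∈ r.atDepth k → x ∈ v.varsFinset → x ∈ r.leavesList :=
        fun v hv hx => mem_varsFinset_iff.mp
          (varsFinset_subset_of_isSubtreeOf (isSubtreeOf_of_mem_atDepth r k v hv) hx)
      rcases (show t ∈ l.atDepth k ∪ r.atDepth k from ht) with h1 | h1 <;>
        rcases (show u ∈ l.atDepth k ∪ r.atDepth k from hu) with h2 | h2
      · exact atDepth_eq_of_mem_vars l hl k t u h1 h2 x hxt hxu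
      · exact absurd rfl (hdisj x (keyl t h1 hxt) x (keyr u h2 hxu))
      · exact absurd rfl (hdisj x (keyl u h2 hxu) x (keyr t h1 hxt))
      · exact atDepth_eq_of_mem_vars r hr k t u h1 h2 x hxt hxu

end Vtree

theorem keyLemma {n a b : ℕ} {V : Vtree (Fin n)} (hVc : V.ContiguousV)
    {k : ℕ} {t : Vtree (Fin n)} (ht : t ∈ maxCover V (finInterval n a b))
    (hd : t ∈ V.atDepth (k+1)) :
    ∃ (mv : ℕ) (side : Bool) (l r : Vtree (Fin n)),
      (mv = a - 1 ∨ mv = b + 1) ∧ Vtree.node l r ∈ V.atDepth k ∧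
      t = (if side then l else r) ∧
      ∃ hmv : mv < n, (⟨mv, hmv⟩ : Fin n) ∈ (Vtree.node l r).varsFinset := by
  obtain ⟨htsub, htS, htmax⟩ := ht
  obtain ⟨l, r, hp, hlr⟩ := Vtree.exists_parent V k t hd
  have hpsub : (Vtree.node l r).IsSubtreeOf V := Vtree.isSubtreeOf_of_mem_atDepth V k _ hp
  have htp : t.IsSubtreeOf (Vtree.node l r) := by
    rcases hlr with h | h <;> rw [h]
    · exact .left (.refl l)
    · exact .right (.refl r)
  have hne : Vtree.node l r ≠ t := by
    intro h
    have hc : t.IsChildOf (Vtree.node l r) := hlr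
    have hlt := Vtree.numNodesV_lt_of_isChildOf hc
    rw [h] at hlt
    exact lt_irrefl _ hlt
  have hnotsub : ¬ ((Vtree.node l r).varsFinset : Set (Fin n)) ⊆ finInterval n a b :=
    fun hsub => hne (htmax _ hpsub hsub htp)
  obtain ⟨x, hxmem, hxS⟩ := Set.not_subset.mp hnotsub
  obtain ⟨y, hy⟩ := Vtree.varsFinset_nonempty t
  have hyS : y ∈ finInterval n a b := htS hy
  obtain ⟨hya, hyb⟩ : a ≤ (y : ℕ) ∧ (y : ℕ) ≤ b := hyS
  have hyp : y ∈ (Vtree.node l r).varsFinset := Vtree.varsFinset_subset_of_isSubtreeOf htp hy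
  obtain ⟨c, d, hcd⟩ := hVc _ hpsub
  have hxmem' : x ∈ (Vtree.node l r).varsFinset := hxmem
  have hx := (hcd x).mp hxmem'
  have hyiv := (hcd y).mp hyp
  have hxS' : (x : ℕ) < a ∨ b < (x : ℕ) := by
    by_contra h
    push_neg at h
    exact hxS ⟨h.1, h.2⟩
  have key : ∃ mv : ℕ, (mv = a - 1 ∨ mv = b + 1) ∧
      ∃ hmv : mv < n, (⟨mv, hmv⟩ : Fin n) ∈ (Vtree.node l r).varsFinset := by
    rcases hxS' with hlt | hgt
    · have h1 : a - 1 < n := by have := y.isLt; omega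
      exact ⟨a - 1, Or.inl rfl, h1, (hcd ⟨a - 1, h1⟩).mpr (by simp; omega)⟩
    · have h1 : b + 1 < n := by have := x.isLt; omega
      exact ⟨b + 1, Or.inr rfl, h1, (hcd ⟨b + 1, h1⟩).mpr (by simp; omega)⟩
  obtain ⟨mv, hmv1, hmv2, hmv3⟩ := key
  rcases hlr with h | h
  · exact ⟨mv, true, l, r, hmv1, hp, by simpa using h, hmv2, hmv3⟩
  · exact ⟨mv, false, l, r, hmv1, hp, by simpa using h, hmv2, hmv3⟩

theorem injLemma {n : ℕ} {V : Vtree (Fin n)} (hnd : V.leavesList.Nodup) {k : ℕ}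
    {t t' l r l' r' : Vtree (Fin n)} {side : Bool} (x : Fin n)
    (h1 : Vtree.node l r ∈ V.atDepth k) (h1' : Vtree.node l' r' ∈ V.atDepth k)
    (hx : x ∈ (Vtree.node l r).varsFinset) (hx' : x ∈ (Vtree.node l' r').varsFinset)
    (ht : t = if side then l else r) (ht' : t' = if side then l' else r') : t = t' := by
  have heq := Vtree.atDepth_eq_of_mem_vars V hnd k _ _ h1 h1' x hx hx'
  injection heq with e1 e2
  cases side <;> simp_all

/-- Let `V` be a contiguous vtree over ordered variables `X₁, …, Xₙ` and
let `[a,b]` be any interval.  Let `C_{a:b}` be the set of ⊆-maximal nodes of `V` whose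
covered interval is contained in `{X_a, …, X_b}`.  Then for every depth level `k` of `V`,
the set `C_{a:b}` contains at most `4` nodes at depth `k`; hence `|C_{a:b}| ≤ 4d` where `d`
is the depth of `V`. -/
theorem statement10 {n : ℕ} (hn : 2 ≤ n) (V : Vtree (Fin n))
    (hV : V.ValidOver Set.univ) (hVc : V.ContiguousV) (a b : ℕ) :
    (∀ k : ℕ, (maxCover V (finInterval n a b) ∩ V.atDepth k).ncard ≤ 4) ∧
      (maxCover V (finInterval n a b)).ncard ≤ 4 * V.depthV := by
  classical
  have hnd : V.leavesList.Nodup := hV.1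
  set F : Finset (ℕ × Bool) :=
    {((a-1 : ℕ), true), ((a-1 : ℕ), false), ((b+1 : ℕ), true), ((b+1 : ℕ), false)} with hF
  have hF4 : F.card ≤ 4 := by
    have c1 := Finset.card_insert_le ((a-1 : ℕ), true)
      ({((a-1 : ℕ), false), ((b+1 : ℕ), true), ((b+1 : ℕ), false)} : Finset (ℕ × Bool))
    have c2 := Finset.card_insert_le ((a-1 : ℕ), false)
      ({((b+1 : ℕ), true), ((b+1 : ℕ), false)} : Finset (ℕ × Bool))
    have c3 := Finset.card_insert_le ((b+1 : ℕ), true)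
      ({((b+1 : ℕ), false)} : Finset (ℕ × Bool))
    have c4 : ({((b+1 : ℕ), false)} : Finset (ℕ × Bool)).card = 1 := Finset.card_singleton _
    rw [hF]
    omega
  have hmemF : ∀ (mv : ℕ) (side : Bool), (mv = a - 1 ∨ mv = b + 1) → (mv, side) ∈ F := by
    intro mv side hor
    rcases hor with h | h <;> subst h <;> cases side <;> simp [hF]
  constructor
  · intro k
    cases k with
    | zero =>
        have hsub : maxCover V (finInterval n a b) ∩ V.atDepth 0 ⊆ {V} := by
          rw [Vtree.atDepth_zero]
          exact Set.inter_subset_right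
        calc (maxCover V (finInterval n a b) ∩ V.atDepth 0).ncard
            ≤ ({V} : Set (Vtree (Fin n))).ncard :=
              Set.ncard_le_ncard hsub (Set.finite_singleton V)
          _ ≤ 4 := by rw [Set.ncard_singleton]; omega
    | succ k =>
        have hkey : ∀ t : Vtree (Fin n),
            ∃ (mv : ℕ) (side : Bool) (l r : Vtree (Fin n)),
              t ∈ maxCover V (finInterval n a b) ∩ V.atDepth (k+1) →
              (mv = a - 1 ∨ mv = b + 1) ∧ Vtree.node l r ∈ V.atDepth k ∧
              t = (if side then l else r) ∧
              ∃ hmv : mv < n, (⟨mv, hmv⟩ : Fin n) ∈ (Vtree.node l r).varsFinset := by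
          intro t
          by_cases h : t ∈ maxCover V (finInterval n a b) ∩ V.atDepth (k+1)
          · obtain ⟨mv, side, l, r, h1, h2, h3, h4⟩ := keyLemma hVc h.1 h.2
            exact ⟨mv, side, l, r, fun _ => ⟨h1, h2, h3, h4⟩⟩
          · exact ⟨0, true, t, t, fun h' => absurd h' h⟩
        choose mv side pl pr hprop using hkey
        have hle := Set.ncard_le_ncard_of_injOn
          (t := (F : Set (ℕ × Bool)))
          (fun t => (mv t, side t))
          (fun t ht => hmemF _ _ (hprop t ht).1)
          (fun t ht t' ht' heq => by
            simp only [Prod.mk.injEq] at heq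
            obtain ⟨e1, e2⟩ := heq
            obtain ⟨_, hp, hside, h1, hx⟩ := hprop t ht
            obtain ⟨_, hp', hside', h1', hx'⟩ := hprop t' ht'
            have hxeq : (⟨mv t', h1'⟩ : Fin n) = ⟨mv t, h1⟩ := by
              simp [Fin.ext_iff, e1]
            rw [hxeq] at hx'
            rw [← e2] at hside'
            exact injLemma hnd (⟨mv t, h1⟩ : Fin n) hp hp' hx hx' hside hside')
          F.finite_toSet
        rw [Set.ncard_coe_finset] at hle
        exact hle.trans hF4
  · by_cases hroot : (V.varsFinset : Set (Fin n)) ⊆ finInterval n a b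
    · have hsub : maxCover V (finInterval n a b) ⊆ {V} := by
        intro t ht
        exact (ht.2.2 V (.refl V) hroot ht.1).symm
      have hd1 : 1 ≤ V.depthV := by
        cases V with
        | leaf x =>
            have h0 := (hV.2 ⟨0, by omega⟩).mpr (Set.mem_univ _)
            have h1 := (hV.2 ⟨1, by omega⟩).mpr (Set.mem_univ _)
            simp [Vtree.leavesList] at h0 h1
            exact absurd (h0.trans h1.symm) (by simp [Fin.ext_iff])
        | node l r => simp [Vtree.depthV]
      calc (maxCover V (finInterval n a b)).ncard
          ≤ ({V} : Set (Vtree (Fin n))).ncard :=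
            Set.ncard_le_ncard hsub (Set.finite_singleton V)
        _ ≤ 4 * V.depthV := by rw [Set.ncard_singleton]; omega
    · have hkey : ∀ t : Vtree (Fin n),
          ∃ (k mv : ℕ) (side : Bool) (l r : Vtree (Fin n)),
            t ∈ maxCover V (finInterval n a b) →
            k < V.depthV ∧ (mv = a - 1 ∨ mv = b + 1) ∧ Vtree.node l r ∈ V.atDepth k ∧
            t = (if side then l else r) ∧
            ∃ hmv : mv < n, (⟨mv, hmv⟩ : Fin n) ∈ (Vtree.node l r).varsFinset := by
        intro t
        by_cases ht : t ∈ maxCover V (finInterval n a b)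
        · obtain ⟨k, hk, hm⟩ := Vtree.exists_atDepth ht.1
          cases k with
          | zero =>
              rw [Vtree.atDepth_zero] at hm
              rw [Set.mem_singleton_iff] at hm
              subst hm
              exact absurd ht.2.1 hroot
          | succ k =>
              obtain ⟨mv, side, l, r, hor, hp, hside, hfin⟩ := keyLemma hVc ht hm
              exact ⟨k, mv, side, l, r, fun _ => ⟨by omega, hor, hp, hside, hfin⟩⟩
        · exact ⟨0, 0, true, t, t, fun h' => absurd h' ht⟩
      choose dep mv side pl pr hprop using hkey
      have hle := Set.ncard_le_ncard_of_injOn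
        (t := ((Finset.range V.depthV ×ˢ F : Finset (ℕ × ℕ × Bool)) : Set (ℕ × ℕ × Bool)))
        (fun t => (dep t, mv t, side t))
        (fun t ht => by
          obtain ⟨hd, hor, _⟩ := hprop t ht
          simp only [Finset.coe_product, Set.mem_prod, Finset.mem_coe, Finset.mem_range]
          exact ⟨hd, hmemF _ _ hor⟩)
        (fun t ht t' ht' heq => by
          simp only [Prod.mk.injEq] at heq
          obtain ⟨e0, e1, e2⟩ := heq
          obtain ⟨_, _, hp, hside, h1, hx⟩ := hprop t ht
          obtain ⟨_, _, hp', hside', h1', hx'⟩ := hprop t' ht'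
          have hxeq : (⟨mv t', h1'⟩ : Fin n) = ⟨mv t, h1⟩ := by
            simp [Fin.ext_iff, e1]
          rw [hxeq] at hx'
          rw [← e0] at hp'
          rw [← e2] at hside'
          exact injLemma hnd (⟨mv t, h1⟩ : Fin n) hp hp' hx hx' hside hside')
        (Finset.range V.depthV ×ˢ F).finite_toSet
      rw [Set.ncard_coe_finset, Finset.card_product, Finset.card_range] at hle
      calc (maxCover V (finInterval n a b)).ncard ≤ V.depthV * F.card := hle
        _ ≤ V.depthV * 4 := Nat.mul_le_mul_left _ hF4
        _ = 4 * V.depthV := Nat.mul_comm _ _
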